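/- For all planar binary trees x and y, one has I_{x/y} = I_x * I_y and I_{x∖y} = I_x ∖ I_y in ℤY. -/

import Mathlib

/-- A planar binary tree: either the trivial tree (a leaf) or an ordered pair of
planar binary trees. -/
inductive PBT : Type
  | leaf : PBT
  | node : PBT → PBT → PBT
  deriving DecidableEq

namespace PBT

/-- Number of internal vertices of a planar binary tree. -/
def size : PBT → ℕ
  | leaf => 0
  | node a b => a.size + b.size + 1

/-- One covering move of the Tamari order: `Rot x y` holds when `y` is obtained
from `x` by replacing some subtree of the form `((a,b),c)` by `(a,(b,c))`. -/
inductive Rot : PBT → PBT → Prop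
  | rot (a b c : PBT) : Rot (node (node a b) c) (node a (node b c))
  | left {a a' : PBT} (b : PBT) : Rot a a' → Rot (node a b) (node a' b)
  | right (a : PBT) {b b' : PBT} : Rot b b' → Rot (node a b) (node a b')

/-- The Tamari order: reflexive-transitive closure of `Rot`. -/
def tle (x y : PBT) : Prop := Relation.ReflTransGen Rot x y

/-- Grafting of `x` on the leftmost leaf of `y` : the operation `x / y`. -/
def over' : PBT → PBT → PBT
  | x, leaf => x
  | x, node y₁ y₂ => node (over' x y₁) y₂

/-- Grafting of `y` on the rightmost leaf of `x` : the operation `x ∖ y`. -/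
def under : PBT → PBT → PBT
  | leaf, y => y
  | node x₁ x₂, y => node x₁ (under x₂ y)

theorem Rot.size_eq {x y : PBT} (h : Rot x y) : x.size = y.size := by
  induction h <;> simp [size] <;> omega

theorem tle.size_eq {x y : PBT} (h : tle x y) : x.size = y.size := by
  induction h with
  | refl => rfl
  | tail _ h ih => rw [ih, h.size_eq]

theorem finite_size_le (n : ℕ) : {z : PBT | z.size ≤ n}.Finite := by
  induction n with
  | zero =>
    apply Set.Finite.subset (Set.finite_singleton leaf)
    rintro (_ | ⟨a, b⟩) hz
    · simp
    · simp [size] at hz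
  | succ n ih =>
    apply Set.Finite.subset ((Set.Finite.image2 node ih ih).insert leaf)
    rintro (_ | ⟨a, b⟩) hz
    · simp
    · simp only [Set.mem_setOf_eq, size] at hz
      exact Set.mem_insert_iff.mpr
        (Or.inr (Set.mem_image2.mpr ⟨a, by simp only [Set.mem_setOf_eq]; omega, b, by simp only [Set.mem_setOf_eq]; omega, rfl⟩))

theorem finite_size (n : ℕ) : {z : PBT | z.size = n}.Finite :=
  (finite_size_le n).subset fun _ hz => le_of_eq hz

theorem finite_tle_right (x : PBT) : {y : PBT | tle y x}.Finite :=
  (finite_size x.size).subset fun _ hy => hy.size_eq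

theorem finite_tle_left (x : PBT) : {y : PBT | tle x y}.Finite :=
  (finite_size x.size).subset fun _ hy => hy.size_eq.symm

theorem finite_interval (x y : PBT) :
    {z : PBT | tle (over' x y) z ∧ tle z (under x y)}.Finite :=
  (finite_tle_right (under x y)).subset fun _ hz => hz.2

-- ===== new material =====

@[simp] lemma over_leaf (x : PBT) : over' x leaf = x := rfl
@[simp] lemma over_node (x a b : PBT) : over' x (node a b) = node (over' x a) b := rfl
@[simp] lemma leaf_under (y : PBT) : under leaf y = y := rfl
@[simp] lemma node_under (a b y : PBT) : under (node a b) y = node a (under b y) := rfl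

@[simp] lemma leaf_over (y : PBT) : over' leaf y = y := by
  induction y with
  | leaf => rfl
  | node a b ih ih2 => simp [ih]

@[simp] lemma under_leaf (x : PBT) : under x leaf = x := by
  induction x with
  | leaf => rfl
  | node a b ih ih2 => simp [ih2]

lemma size_over (x y : PBT) : (over' x y).size = x.size + y.size := by
  induction y with
  | leaf => simp [size]
  | node a b ih ih2 => simp [size, ih]; omega

lemma size_under (x y : PBT) : (under x y).size = x.size + y.size := by
  induction x with
  | leaf => simp [size]
  | node a b ih ih2 => simp [size, ih2]; omega

@[simp] lemma size_eq_zero_iff (x : PBT) : x.size = 0 ↔ x = leaf := by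
  cases x <;> simp [size]

lemma tle.refl' (x : PBT) : tle x x := Relation.ReflTransGen.refl

lemma tle.trans' {x y z : PBT} (h : tle x y) (h' : tle y z) : tle x z :=
  Relation.ReflTransGen.trans h h'

lemma Rot.tle {x y : PBT} (h : Rot x y) : tle x y := Relation.ReflTransGen.single h

lemma tle_node_left {a a' : PBT} (b : PBT) (h : tle a a') : tle (node a b) (node a' b) :=
  Relation.ReflTransGen.lift (fun t => node t b) (fun _ _ h => Rot.left b h) _ _ h

lemma tle_node_right (a : PBT) {b b' : PBT} (h : tle b b') : tle (node a b) (node a b') :=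
  Relation.ReflTransGen.lift (fun t => node a t) (fun _ _ h => Rot.right a h) _ _ h

lemma tle_node {a a' b b' : PBT} (ha : tle a a') (hb : tle b b') :
    tle (node a b) (node a' b') :=
  (tle_node_left b ha).trans' (tle_node_right a' hb)

lemma node_of_tle_left {a b : PBT} {x' : PBT} (h : tle (node a b) x') :
    ∃ c d, x' = node c d := by
  cases x' with
  | leaf => have := h.size_eq; simp [size] at this
  | node c d => exact ⟨c, d, rfl⟩

lemma node_of_tle_right {a b : PBT} {x' : PBT} (h : tle x' (node a b)) :
    ∃ c d, x' = node c d := by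
  cases x' with
  | leaf => have := h.size_eq; simp [size] at this
  | node c d => exact ⟨c, d, rfl⟩

lemma Rot.over_left {x x' : PBT} (h : Rot x x') (y : PBT) :
    Rot (over' x y) (over' x' y) := by
  induction y with
  | leaf => simpa
  | node a b ih ih2 => exact Rot.left b ih

lemma Rot.over_right (x : PBT) {y y' : PBT} (h : Rot y y') :
    Rot (over' x y) (over' x y') := by
  induction h with
  | rot a b c => exact Rot.rot (over' x a) b c
  | left b h ih => exact Rot.left b ih
  | right a h ih => exact Rot.right _ h

lemma Rot.under_left {x x' : PBT} (h : Rot x x') (y : PBT) :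
    Rot (under x y) (under x' y) := by
  induction h with
  | rot a b c => exact Rot.rot a b (under c y)
  | left b h ih => exact Rot.left _ h
  | right a h ih => exact Rot.right a ih

lemma Rot.under_right (x : PBT) {y y' : PBT} (h : Rot y y') :
    Rot (under x y) (under x y') := by
  induction x with
  | leaf => simpa
  | node a b ih ih2 => exact Rot.right a ih2

lemma tle_over {x x' y y' : PBT} (hx : tle x x') (hy : tle y y') :
    tle (over' x y) (over' x' y') :=
  tle.trans'
    (Relation.ReflTransGen.lift (fun t => over' t y) (fun _ _ h => h.over_left y) _ _ hx)
    (Relation.ReflTransGen.lift (fun t => over' x' t) (fun _ _ h => Rot.over_right x' h) _ _ hy)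

lemma tle_under {x x' y y' : PBT} (hx : tle x x') (hy : tle y y') :
    tle (under x y) (under x' y') :=
  tle.trans'
    (Relation.ReflTransGen.lift (fun t => under t y) (fun _ _ h => h.under_left y) _ _ hx)
    (Relation.ReflTransGen.lift (fun t => under x' t) (fun _ _ h => Rot.under_right x' h) _ _ hy)

def wt : PBT → ℕ
  | leaf => 0
  | node a b => wt a + wt b + b.size

lemma Rot.wt_lt {x y : PBT} (h : Rot x y) : wt x < wt y := by
  induction h with
  | rot a b c => simp [wt, size]; omega
  | left b h ih => simp [wt]; omega
  | right a h ih => have := h.size_eq; simp [wt]; omega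

lemma tle.wt_le {x y : PBT} (h : tle x y) : wt x ≤ wt y := by
  induction h with
  | refl => exact le_rfl
  | tail _ h ih => exact ih.trans h.wt_lt.le

lemma tle_antisymm {x y : PBT} (h : tle x y) (h' : tle y x) : x = y := by
  rcases (Relation.ReflTransGen.cases_head h) with rfl | ⟨c, hc, hcy⟩
  · rfl
  · exact absurd (hc.wt_lt.trans_le ((tle.wt_le hcy).trans h'.wt_le)) (lt_irrefl _)


-- ===== the interval predicate Q =====

inductive Q : PBT → PBT → PBT → Prop
  | base (x : PBT) : Q x leaf x
  | leafy (y₁ y₂ : PBT) : Q leaf (node y₁ y₂) (node y₁ y₂)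
  | left {x₁ x₂ y₁ z₁ : PBT} (y₂ : PBT) :
      Q (node x₁ x₂) y₁ z₁ → Q (node x₁ x₂) (node y₁ y₂) (node z₁ y₂)
  | right {x₂ y₁ y₂ z₂ : PBT} (x₁ : PBT) :
      Q x₂ (node y₁ y₂) z₂ → Q (node x₁ x₂) (node y₁ y₂) (node x₁ z₂)

lemma Q.leaf_self (y : PBT) : Q leaf y y := by
  cases y with
  | leaf => exact Q.base leaf
  | node a b => exact Q.leafy a b

lemma Q.left' {x y₁ z₁ : PBT} (y₂ : PBT) (h : Q x y₁ z₁) :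
    Q x (node y₁ y₂) (node z₁ y₂) := by
  cases x with
  | leaf =>
    cases h with
    | base => exact Q.leafy leaf y₂
    | leafy a b => exact Q.leafy (node a b) y₂
  | node a b => exact Q.left y₂ h

lemma Q.right' {x₂ y z₂ : PBT} (x₁ : PBT) (h : Q x₂ y z₂) :
    Q (node x₁ x₂) y (node x₁ z₂) := by
  cases y with
  | leaf => cases h with | base => exact Q.base (node x₁ x₂)
  | node a b => exact Q.right x₁ h

lemma Q.cons (x y₂ : PBT) : Q x (node leaf y₂) (node x y₂) :=
  Q.left' y₂ (Q.base x)

lemma Q.snoc (x₁ y : PBT) : Q (node x₁ leaf) y (node x₁ y) :=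
  Q.right' x₁ (Q.leaf_self y)

lemma Q.size_eq {x y z : PBT} (h : Q x y z) : z.size = x.size + y.size := by
  induction h with
  | base x => simp [size]
  | leafy y₁ y₂ => simp [size]
  | left y₂ h ih => simp [size] at *; omega
  | right x₁ h ih => simp [size] at *; omega

lemma Q.over_self (x y : PBT) : Q x y (over' x y) := by
  induction y with
  | leaf => exact Q.base x
  | node a b iha ihb => exact Q.left' b iha

lemma Q.under_self (x y : PBT) : Q x y (under x y) := by
  induction x with
  | leaf => exact Q.leaf_self y
  | node a b iha ihb => exact Q.right' a ihb

lemma tle_under_assoc (x a b : PBT) : tle (node (under x a) b) (under x (node a b)) := by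
  induction x with
  | leaf => exact tle.refl' _
  | node x₁ x₂ ih₁ ih₂ =>
    refine tle.trans' (Rot.tle (Rot.rot x₁ (under x₂ a) b)) ?_
    exact tle_node_right x₁ ih₂

lemma tle_over_assoc (x₁ x₂ y : PBT) :
    tle (over' (node x₁ x₂) y) (node x₁ (over' x₂ y)) := by
  induction y with
  | leaf => exact tle.refl' _
  | node a b iha ihb =>
    refine tle.trans' (tle_node_left b iha) ?_
    exact Rot.tle (Rot.rot x₁ (over' x₂ a) b)

lemma Q.tle_low {x y z : PBT} (h : Q x y z) : tle (over' x y) z := by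
  induction h with
  | base x => exact tle.refl' _
  | leafy y₁ y₂ => simp [tle.refl']
  | left y₂ h ih => exact tle_node_left y₂ ih
  | right x₁ h ih => exact tle.trans' (tle_over_assoc x₁ _ _) (tle_node_right x₁ ih)

lemma Q.tle_high {x y z : PBT} (h : Q x y z) : tle z (under x y) := by
  induction h with
  | base x => simp [tle.refl']
  | leafy y₁ y₂ => exact tle.refl' _
  | left y₂ h ih => exact tle.trans' (tle_node_left y₂ ih) (tle_under_assoc _ _ _)
  | right x₁ h ih => exact tle_node_right x₁ ih


lemma Q.up {x y z w : PBT} (h : Q x y z) (hr : Rot z w) :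
    ∃ x' y', tle x x' ∧ tle y y' ∧ Q x' y' w := by
  induction h generalizing w with
  | base x => exact ⟨w, leaf, hr.tle, tle.refl' _, Q.base w⟩
  | leafy y₁ y₂ => exact ⟨leaf, w, tle.refl' _, hr.tle, Q.leaf_self w⟩
  | @left x₁ x₂ y₁ z₁ y₂ h ih =>
    cases hr with
    | left b hr' =>
      obtain ⟨x', y₁', hx, hy, hQ⟩ := ih hr'
      exact ⟨x', node y₁' y₂, hx, tle_node_left y₂ hy, hQ.left' y₂⟩
    | right a hr' =>
      exact ⟨node x₁ x₂, node y₁ _, tle.refl' _, tle_node_right y₁ hr'.tle, Q.left _ h⟩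
    | rot a b c =>
      -- here z₁ = node a b, y₂ = c, w = node a (node b y₂)
      cases h with
      | base => exact ⟨node x₁ x₂, node leaf y₂, tle.refl' _, tle.refl' _,
          Q.right x₁ (Q.cons x₂ y₂)⟩
      | @left u₁ u₂ v₁ p v₂ h' =>
        -- y₁ = node v₁ v₂ ; z₁ = node p v₂ so a = p, b = v₂
        refine ⟨node x₁ x₂, node v₁ (node b y₂), tle.refl' _,
          (Rot.rot v₁ b y₂).tle, ?_⟩
        exact Q.left (node b y₂) h'
      | @right u₂ v₁ v₂ q u₁ h' =>
        -- z₁ = node u₁ q, a = u₁, b = q, h' : Q u₂ (node v₁ v₂) q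
        exact ⟨node x₁ x₂, node (node v₁ v₂) y₂, tle.refl' _, tle.refl' _,
          Q.right x₁ (h'.left' y₂)⟩
  | @right x₂ y₁ y₂ z₂ x₁ h ih =>
    cases hr with
    | left b hr' =>
      exact ⟨node _ x₂, node y₁ y₂, tle_node_left x₂ hr'.tle, tle.refl' _, Q.right _ h⟩
    | right a hr' =>
      obtain ⟨x₂', y', hx, hy, hQ⟩ := ih hr'
      exact ⟨node x₁ x₂', y', tle_node_right x₁ hx, hy, hQ.right' x₁⟩
    | rot a b c =>
      -- x₁ = node a b, w = node a (node b z₂)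
      exact ⟨node a (node b x₂), node y₁ y₂, (Rot.rot a b x₂).tle, tle.refl' _,
        Q.right' a (Q.right' b h)⟩

lemma Q.down {x y w z : PBT} (h : Q x y w) (hr : Rot z w) :
    ∃ x' y', tle x' x ∧ tle y' y ∧ Q x' y' z := by
  induction h generalizing z with
  | base x => exact ⟨z, leaf, hr.tle, tle.refl' _, Q.base z⟩
  | leafy y₁ y₂ => exact ⟨leaf, z, tle.refl' _, hr.tle, Q.leaf_self z⟩
  | @left x₁ x₂ y₁ w₁ y₂ h ih =>
    cases hr with
    | rot a b c =>
      -- z = node (node a b) c, node a (node b c) = node w₁ y₂: a = w₁, y₂ = node b c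
      refine ⟨node x₁ x₂, node (node y₁ b) c, tle.refl' _, (Rot.rot y₁ b c).tle, ?_⟩
      exact Q.left c (Q.left b h)
    | left b hr' =>
      obtain ⟨x', y₁', hx, hy, hQ⟩ := ih hr'
      exact ⟨x', node y₁' y₂, hx, tle_node_left y₂ hy, hQ.left' y₂⟩
    | right a hr' =>
      exact ⟨node x₁ x₂, node y₁ _, tle.refl' _, tle_node_right y₁ hr'.tle, Q.left _ h⟩
  | @right x₂ y₁ y₂ w₂ x₁ h ih =>
    cases hr with
    | rot a b c =>
      -- a = x₁, w₂ = node b c, z = node (node x₁ b) c, h : Q x₂ (node y₁ y₂) (node b c)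
      cases h with
      | leafy =>
        exact ⟨node x₁ leaf, node y₁ y₂, tle.refl' _, tle.refl' _, Q.left y₂ (Q.snoc x₁ y₁)⟩
      | @left u₁ u₂ v₁ p v₂ h' =>
        -- x₂ = node u₁ u₂, b = p, c = v₂ = y₂, h' : Q (node u₁ u₂) y₁ p
        exact ⟨node x₁ (node u₁ u₂), node y₁ y₂, tle.refl' _, tle.refl' _,
          Q.left y₂ (Q.right' x₁ h')⟩
      | @right u₂ v₁ v₂ q u₁ h' =>
        -- x₂ = node u₁ u₂, b = u₁, c = q, h' : Q u₂ (node y₁ y₂) q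
        exact ⟨node (node x₁ b) u₂, node y₁ y₂, (Rot.rot x₁ b u₂).tle, tle.refl' _,
          Q.right (node x₁ b) h'⟩
    | left b hr' =>
      exact ⟨node _ x₂, node y₁ y₂, tle_node_left x₂ hr'.tle, tle.refl' _, Q.right _ h⟩
    | right a hr' =>
      obtain ⟨x₂', y', hx, hy, hQ⟩ := ih hr'
      exact ⟨node x₁ x₂', y', tle_node_right x₁ hx, hy, hQ.right' x₁⟩

lemma Q.unique {x y x' y' z : PBT} (h : Q x y z) (h' : Q x' y' z)
    (hs : y.size = y'.size) : x = x' ∧ y = y' := by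
  induction h generalizing x' y' with
  | base x =>
    obtain rfl : y' = leaf := by
      have h1 : y'.size = 0 := by simpa [size] using hs.symm
      rwa [size_eq_zero_iff] at h1
    cases h' with
    | base => exact ⟨rfl, rfl⟩
  | leafy y₁ y₂ =>
    cases h' with
    | base => simp [size] at hs
    | leafy => exact ⟨rfl, rfl⟩
    | @left a₁ a₂ b₁ c₁ b₂ h'' =>
      -- node y₁ y₂ = node c₁ b₂ : c₁ = y₁, b₂ = y₂
      have h1 := h''.size_eq
      simp [size] at hs h1
      omega
    | @right a₂ b₁ b₂ c₂ a₁ h'' =>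
      have h1 := h''.size_eq
      simp [size] at hs h1
      omega
  | @left x₁ x₂ y₁ z₁ y₂ h ih =>
    cases h' with
    | base =>
      have h1 := h.size_eq
      simp [size] at hs
    | leafy =>
      have h1 := h.size_eq
      simp [size] at hs h1
      omega
    | @left a₁ a₂ b₁ c₁ b₂ h'' =>
      -- node z₁ y₂ = node c₁ b₂
      have hsz : y₁.size = b₁.size := by simp [size] at hs; omega
      obtain ⟨hx, hy⟩ := ih h'' hsz
      exact ⟨hx, by rw [hy]⟩
    | @right a₂ b₁ b₂ c₂ a₁ h'' =>
      -- z = node z₁ y₂ = node a₁ c₂ : a₁ = z₁, c₂ = y₂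
      have h1 := h.size_eq
      have h2 := h''.size_eq
      simp [size] at hs h1 h2
      omega
  | @right x₂ y₁ y₂ z₂ x₁ h ih =>
    cases h' with
    | base =>
      simp [size] at hs
    | leafy =>
      have h1 := h.size_eq
      simp [size] at hs h1
      omega
    | @left a₁ a₂ b₁ c₁ b₂ h'' =>
      -- node x₁ z₂ = node c₁ b₂ : c₁ = x₁, b₂ = z₂
      have h1 := h.size_eq
      have h2 := h''.size_eq
      simp [size] at hs h1 h2
      omega
    | @right a₂ b₁ b₂ c₂ a₁ h'' =>
      have hsz : (node y₁ y₂).size = (node b₁ b₂).size := hs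
      obtain ⟨hx, hy⟩ := ih h'' hsz
      exact ⟨by rw [hx], hy⟩

lemma tle_over_decomp {x y z : PBT} (h : tle (over' x y) z) :
    ∃ x' y', tle x x' ∧ tle y y' ∧ Q x' y' z := by
  induction h with
  | refl => exact ⟨x, y, tle.refl' _, tle.refl' _, Q.over_self x y⟩
  | tail _ hr ih =>
    obtain ⟨x', y', hx, hy, hQ⟩ := ih
    obtain ⟨x'', y'', hx', hy', hQ'⟩ := hQ.up hr
    exact ⟨x'', y'', tle.trans' hx hx', tle.trans' hy hy', hQ'⟩

lemma tle_under_decompQ {x y z : PBT} (h : tle z (under x y)) :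
    ∃ x' y', tle x' x ∧ tle y' y ∧ Q x' y' z := by
  induction h using Relation.ReflTransGen.head_induction_on with
  | refl => exact ⟨x, y, tle.refl' _, tle.refl' _, Q.under_self x y⟩
  | head hr _ ih =>
    obtain ⟨x', y', hx, hy, hQ⟩ := ih
    obtain ⟨x'', y'', hx', hy', hQ'⟩ := hQ.down hr
    exact ⟨x'', y'', tle.trans' hx' hx, tle.trans' hy' hy, hQ'⟩

lemma Q_iff_bounds {x y z : PBT} :
    Q x y z ↔ tle (over' x y) z ∧ tle z (under x y) := by
  constructor
  · exact fun h => ⟨h.tle_low, h.tle_high⟩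
  · rintro ⟨h1, h2⟩
    obtain ⟨x₁, y₁, hx1, hy1, hQ1⟩ := tle_over_decomp h1
    obtain ⟨x₂, y₂, hx2, hy2, hQ2⟩ := tle_under_decompQ h2
    have hs : y₁.size = y₂.size := by
      rw [← hy1.size_eq, (tle.size_eq hy2)]
    obtain ⟨hxe, hye⟩ := hQ1.unique hQ2 hs
    subst hxe; subst hye
    obtain rfl : x₁ = x := tle_antisymm hx2 hx1
    obtain rfl : y₁ = y := tle_antisymm hy2 hy1
    exact hQ1

lemma under_inj {a b c d : PBT} (h : under a b = under c d) (hs : b.size = d.size) :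
    a = c ∧ b = d := by
  induction a generalizing c with
  | leaf =>
    cases c with
    | leaf => exact ⟨rfl, by simpa using h⟩
    | node c₁ c₂ =>
      have h1 := congrArg size h
      simp [size_under, size] at h1
      omega
  | node a₁ a₂ ih₁ ih₂ =>
    cases c with
    | leaf =>
      have h1 := congrArg size h
      simp [size_under, size] at h1
      omega
    | node c₁ c₂ =>
      simp only [node_under, node.injEq] at h
      obtain ⟨rfl, h2⟩ := h
      obtain ⟨rfl, rfl⟩ := ih₂ h2
      exact ⟨rfl, rfl⟩

lemma Rot_under_decomp {x y z : PBT} (h : Rot (under x y) z) :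
    ∃ x' y', z = under x' y' ∧ tle x x' ∧ tle y y' := by
  induction x generalizing z with
  | leaf => exact ⟨leaf, z, rfl, tle.refl' _, h.tle⟩
  | node x₁ x₂ ih₁ ih₂ =>
    rw [node_under] at h
    cases h with
    | rot a b c =>
      -- x₁ = node a b, c = under x₂ y, z = node a (node b (under x₂ y))
      exact ⟨node a (node b x₂), y, by simp, (Rot.rot a b x₂).tle, tle.refl' _⟩
    | left b hr' =>
      exact ⟨node _ x₂, y, by simp, tle_node_left x₂ hr'.tle, tle.refl' _⟩
    | right a hr' =>
      obtain ⟨x₂', y', rfl, hx, hy⟩ := ih₂ hr'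
      exact ⟨node x₁ x₂', y', by simp, tle_node_right x₁ hx, hy⟩

lemma tle_under_decomp {x y z : PBT} (h : tle (under x y) z) :
    ∃ x' y', z = under x' y' ∧ tle x x' ∧ tle y y' := by
  induction h with
  | refl => exact ⟨x, y, rfl, tle.refl' _, tle.refl' _⟩
  | tail _ hr ih =>
    obtain ⟨x', y', rfl, hx, hy⟩ := ih
    obtain ⟨x'', y'', rfl, hx', hy'⟩ := Rot_under_decomp hr
    exact ⟨x'', y'', rfl, tle.trans' hx hx', tle.trans' hy hy'⟩

end PBT

/-- The free abelian group `ℤY = ⊕ₙ ℤYₙ` on the set of all planar binary trees. -/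
abbrev ZY : Type := PBT →₀ ℤ

namespace PBT

/-- The basis element `S_x` of `ℤY`. -/
noncomputable def S (x : PBT) : ZY := Finsupp.single x 1

/-- The class `P_x = ∑_{y ≤ x} S_y` of the projective module. -/
noncomputable def P (x : PBT) : ZY := ∑ y ∈ (finite_tle_right x).toFinset, S y

/-- The class `I_x = ∑_{y ≥ x} S_y` of the injective module. -/
noncomputable def I (x : PBT) : ZY := ∑ y ∈ (finite_tle_left x).toFinset, S y

/-- The Loday-Ronco product on basis elements:
`S_x * S_y = ∑_{x/y ≤ z ≤ x∖y} S_z`. -/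
noncomputable def starB (x y : PBT) : ZY := ∑ z ∈ (finite_interval x y).toFinset, S z

/-- Bilinear extension of a product defined on basis elements. -/
noncomputable def bilin (f : PBT → PBT → ZY) (a b : ZY) : ZY :=
  a.sum fun x ax => b.sum fun y byy => (ax * byy) • f x y

/-- The product `/` on `ℤY`, with `S_x / S_y = S_{x/y}`. -/
noncomputable def overM : ZY → ZY → ZY := bilin fun x y => S (x.over' y)

/-- The product `∖` on `ℤY`, with `S_x ∖ S_y = S_{x∖y}`. -/
noncomputable def underM : ZY → ZY → ZY := bilin fun x y => S (x.under y)

/-- The Loday-Ronco product `*` on `ℤY`. -/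
noncomputable def starM : ZY → ZY → ZY := bilin starB

/-- The unique planar binary tree `•` with one internal vertex. -/
def dot : PBT := node leaf leaf


lemma bilin_zero_left (f : PBT → PBT → ZY) (b : ZY) : bilin f 0 b = 0 :=
  Finsupp.sum_zero_index

lemma bilin_add_left (f : PBT → PBT → ZY) (a₁ a₂ b : ZY) :
    bilin f (a₁ + a₂) b = bilin f a₁ b + bilin f a₂ b := by
  unfold bilin
  apply Finsupp.sum_add_index' <;> intros <;>
    simp [add_mul, add_smul, Finsupp.sum_add]

lemma bilin_single_zero_right (f : PBT → PBT → ZY) (a : ZY) : bilin f a 0 = 0 := by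
  unfold bilin
  simp [Finsupp.sum_zero_index]

lemma bilin_add_right (f : PBT → PBT → ZY) (a b₁ b₂ : ZY) :
    bilin f a (b₁ + b₂) = bilin f a b₁ + bilin f a b₂ := by
  unfold bilin
  rw [← Finsupp.sum_add]
  refine Finsupp.sum_congr fun x hx => ?_
  apply Finsupp.sum_add_index' <;> intros <;>
    simp [mul_add, add_smul]

lemma bilin_single_single (f : PBT → PBT → ZY) (x y : PBT) :
    bilin f (S x) (S y) = f x y := by
  unfold bilin S
  rw [Finsupp.sum_single_index (by simp)]
  rw [Finsupp.sum_single_index (by simp)]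
  simp

lemma bilin_sum_left (f : PBT → PBT → ZY) (A : Finset PBT) (g : PBT → ZY) (b : ZY) :
    bilin f (∑ a ∈ A, g a) b = ∑ a ∈ A, bilin f (g a) b := by
  classical
  induction A using Finset.induction_on with
  | empty => simp [bilin_zero_left]
  | @insert a A ha ih =>
    rw [Finset.sum_insert ha, Finset.sum_insert ha, bilin_add_left, ih]

lemma bilin_sum_right (f : PBT → PBT → ZY) (a : ZY) (B : Finset PBT) (g : PBT → ZY) :
    bilin f a (∑ b ∈ B, g b) = ∑ b ∈ B, bilin f a (g b) := by
  classical
  induction B using Finset.induction_on with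
  | empty => simp [bilin_single_zero_right]
  | @insert b B hb ih =>
    rw [Finset.sum_insert hb, Finset.sum_insert hb, bilin_add_right, ih]

lemma bilin_I_I (x y : PBT) (f : PBT → PBT → ZY) :
    bilin f (I x) (I y) =
      ∑ p ∈ (finite_tle_left x).toFinset ×ˢ (finite_tle_left y).toFinset, f p.1 p.2 := by
  rw [Finset.sum_product, I, I, bilin_sum_left]
  refine Finset.sum_congr rfl fun a _ => ?_
  rw [bilin_sum_right]
  exact Finset.sum_congr rfl fun b _ => bilin_single_single f a b

lemma mem_tle_left_toFinset {x a : PBT} :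
    a ∈ (finite_tle_left x).toFinset ↔ tle x a := by
  simp [Set.Finite.mem_toFinset]

lemma mem_interval_toFinset {x y z : PBT} :
    z ∈ (finite_interval x y).toFinset ↔ tle (over' x y) z ∧ tle z (under x y) := by
  simp [Set.Finite.mem_toFinset]

end PBT

open PBT in
/-- For all planar binary trees `x, y` : `I_{x/y} = I_x * I_y` and
`I_{x∖y} = I_x ∖ I_y` in `ℤY`. -/
theorem I_basis_products (x y : PBT) :
    I (x.over' y) = starM (I x) (I y) ∧ I (x.under y) = underM (I x) (I y) := by
  classical
  constructor
  · show I (over' x y) = bilin starB (I x) (I y)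
    rw [bilin_I_I]
    simp only [starB]
    have hdisj : (↑((finite_tle_left x).toFinset ×ˢ (finite_tle_left y).toFinset) :
        Set (PBT × PBT)).PairwiseDisjoint
        (fun p : PBT × PBT => (finite_interval p.1 p.2).toFinset) := by
      rintro p hp q hq hne
      simp only [Finset.coe_product, Set.mem_prod, Set.Finite.coe_toFinset,
        Set.mem_setOf_eq] at hp hq
      refine Finset.disjoint_left.mpr fun z hzp hzq => hne ?_
      rw [mem_interval_toFinset] at hzp hzq
      have hQp : Q p.1 p.2 z := Q_iff_bounds.mpr hzp
      have hQq : Q q.1 q.2 z := Q_iff_bounds.mpr hzq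
      have hs : p.2.size = q.2.size := by
        rw [← (tle.size_eq hp.2), ← (tle.size_eq hq.2)]
      obtain ⟨h1, h2⟩ := hQp.unique hQq hs
      exact Prod.ext h1 h2
    rw [← Finset.sum_biUnion hdisj]
    rw [I]
    congr 1
    ext z
    simp only [Finset.mem_biUnion, mem_tle_left_toFinset, mem_interval_toFinset,
      Finset.mem_product]
    constructor
    · intro hz
      obtain ⟨x', y', hx', hy', hQ⟩ := tle_over_decomp hz
      exact ⟨(x', y'), ⟨hx', hy'⟩, hQ.tle_low, hQ.tle_high⟩
    · rintro ⟨p, ⟨hp1, hp2⟩, hz1, _⟩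
      exact tle.trans' (tle_over hp1 hp2) hz1
  · show I (under x y) = bilin (fun a b => S (a.under b)) (I x) (I y)
    rw [bilin_I_I, I]
    symm
    refine Finset.sum_bij (fun p _ => p.1.under p.2) ?_ ?_ ?_ ?_
    · rintro ⟨a, b⟩ hp
      rw [Finset.mem_product] at hp
      exact mem_tle_left_toFinset.mpr
        (tle_under (mem_tle_left_toFinset.mp hp.1) (mem_tle_left_toFinset.mp hp.2))
    · rintro ⟨a₁, b₁⟩ h₁ ⟨a₂, b₂⟩ h₂ heq
      rw [Finset.mem_product] at h₁ h₂
      have hs : b₁.size = b₂.size := by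
        rw [← (tle.size_eq (mem_tle_left_toFinset.mp h₁.2)),
          ← (tle.size_eq (mem_tle_left_toFinset.mp h₂.2))]
      obtain ⟨rfl, rfl⟩ := under_inj heq hs
      rfl
    · intro z hz
      obtain ⟨x', y', rfl, hx', hy'⟩ := tle_under_decomp (mem_tle_left_toFinset.mp hz)
      exact ⟨(x', y'), Finset.mem_product.mpr
        ⟨mem_tle_left_toFinset.mpr hx', mem_tle_left_toFinset.mpr hy'⟩, rfl⟩
    · intros; rfl
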